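/- Let f(w) = (1/N)∑_{i=1}^N F_i(w) with each F_i : ℝ^d → ℝ continuously differentiable, and suppose there exist constants β₁ g, β₂ g ≥ 0 such that ‖∇F_i(w)‖² ≤ β₁ g ‖∇f(w)‖² + β₂ g for all i and all w ∈ ℝ^d. Fix w ∈ ℝ^d, a symmetric positive definite d×d matrix A with largest eigenvalue λ_max(A), θ ∈ [0,1] and ι > 0. If X ⊆ {1,…,N} is nonempty with |X| ≥ N·(1 − √((θ²‖∇f(w)‖_A² + ι)/(4 λ_max(A)(β₁ g ‖∇f(w)‖² + β₂ g)))), then the subsampled gradient g = (1/|X|)∑_{i∈X}∇F_i(w) satisfies the deterministic norm condition ‖g − ∇f(w)‖_A² ≤ θ²‖∇f(w)‖_A² + ι. -/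

import Mathlib

open Finset Matrix
open scoped RealInnerProductSpace

noncomputable section

abbrev Vec (d : ℕ) := EuclideanSpace ℝ (Fin d)

/-- The continuous linear operator on Euclidean space associated with a matrix. -/
noncomputable def toOp {d : ℕ} (A : Matrix (Fin d) (Fin d) ℝ) : Vec d →L[ℝ] Vec d :=
  LinearMap.toContinuousLinearMap (Matrix.toEuclideanLin A)

lemma toOp_inner_pos {d : ℕ} {A : Matrix (Fin d) (Fin d) ℝ} (hA : A.PosDef)
    {v : Vec d} (hv : v ≠ 0) : 0 < ⟪toOp A v, v⟫ := by
  have h := hA.dotProduct_mulVec_pos (x := WithLp.equiv 2 _ v) (by simpa using hv)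
  simp only [star_trivial] at h
  calc (0:ℝ) < (WithLp.equiv 2 _ v) ⬝ᵥ (A *ᵥ WithLp.equiv 2 _ v) := h
  _ = ⟪toOp A v, v⟫ := by
      simp [toOp, PiLp.inner_apply, Matrix.toEuclideanLin_apply, dotProduct, mul_comm]

lemma toOp_inner_nonneg {d : ℕ} {A : Matrix (Fin d) (Fin d) ℝ} (hA : A.PosDef)
    (v : Vec d) : 0 ≤ ⟪toOp A v, v⟫ := by
  rcases eq_or_ne v 0 with rfl | hv
  · simp
  · exact (toOp_inner_pos hA hv).le

set_option maxHeartbeats 1600000 in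
/-- Gradient sample size guaranteeing the deterministic norm condition
for the finite-sum problem. -/
theorem gradient_sample_size_deterministic_norm_condition {d N : ℕ} (hN : 1 ≤ N)
    (F : Fin N → Vec d → ℝ) (gradF : Fin N → Vec d → Vec d)
    (f : Vec d → ℝ) (gradf : Vec d → Vec d)
    (hf : ∀ x, f x = (N : ℝ)⁻¹ * ∑ i, F i x)
    (hFdiff : ∀ i, ContDiff ℝ 1 (F i))
    (hgradF : ∀ i x, HasGradientAt (F i) (gradF i x) x)
    (hgradf : ∀ x, HasGradientAt f (gradf x) x)
    (β₁ β₂ : ℝ) (hβ₁ : 0 ≤ β₁) (hβ₂ : 0 ≤ β₂)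
    (hbound : ∀ i x, ‖gradF i x‖ ^ 2 ≤ β₁ * ‖gradf x‖ ^ 2 + β₂)
    (w : Vec d)
    (A : Matrix (Fin d) (Fin d) ℝ) (hAsym : A.IsSymm) (hA : A.PosDef)
    (lmax : ℝ) (hlmax : ∀ v : Vec d, ⟪toOp A v, v⟫ ≤ lmax * ‖v‖ ^ 2)
    (θ ι : ℝ) (hθ : θ ∈ Set.Icc (0 : ℝ) 1) (hι : 0 < ι)
    (X : Finset (Fin N)) (hX : X.Nonempty)
    (hcard : (N : ℝ) * (1 - Real.sqrt ((θ ^ 2 * ⟪toOp A (gradf w), gradf w⟫ + ι) /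
        (4 * lmax * (β₁ * ‖gradf w‖ ^ 2 + β₂)))) ≤ X.card)
    (g : Vec d) (hg : g = (X.card : ℝ)⁻¹ • ∑ i ∈ X, gradF i w) :
    ⟪toOp A (g - gradf w), g - gradf w⟫ ≤ θ ^ 2 * ⟪toOp A (gradf w), gradf w⟫ + ι := by
  set G := gradf w with hG
  set v := g - G with hv
  set B2 : ℝ := β₁ * ‖G‖ ^ 2 + β₂ with hB2def
  set S : ℝ := θ ^ 2 * ⟪toOp A G, G⟫ + ι with hSdef
  have hB2 : 0 ≤ B2 := by positivity
  have hS : 0 ≤ S := by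
    have := toOp_inner_nonneg hA G
    have : 0 ≤ θ ^ 2 * ⟪toOp A G, G⟫ := by positivity
    linarith
  -- basic cardinalities
  have hkpos : 0 < X.card := Finset.card_pos.mpr hX
  have hk1 : (1:ℝ) ≤ (X.card : ℝ) := by exact_mod_cast hkpos
  have hkN : (X.card : ℝ) ≤ (N : ℝ) := by
    exact_mod_cast (X.card_le_univ.trans_eq (by simp))
  have hn1 : (1:ℝ) ≤ (N : ℝ) := by exact_mod_cast hN
  have hn0 : (0:ℝ) < (N : ℝ) := by linarith
  have hk0 : (0:ℝ) < (X.card : ℝ) := by linarith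
  set k : ℝ := (X.card : ℝ)
  set n : ℝ := (N : ℝ)
  -- gradient of the average
  have hGsum : G = n⁻¹ • ∑ i, gradF i w := by
    refine (hgradf w).unique ?_
    rw [hasGradientAt_iff_hasFDerivAt]
    have h1 : HasFDerivAt (fun x => ∑ i, F i x)
        (∑ i : Fin N, InnerProductSpace.toDual ℝ _ (gradF i w)) w :=
      HasFDerivAt.fun_sum fun i _ => (hgradF i w).hasFDerivAt
    have h2 := h1.const_smul (n⁻¹)
    have heq : (n⁻¹ • fun x => ∑ i, F i x) = f := by
      funext x; rw [hf x]; simp [smul_eq_mul]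
    rw [heq] at h2
    refine h2.congr_fderiv ?_
    simp [map_sum, map_smulₛₗ]
  -- bound on the individual gradients
  have hnormh : ∀ i : Fin N, ‖gradF i w‖ ≤ Real.sqrt B2 := by
    intro i
    have h := hbound i w
    have := Real.sqrt_le_sqrt (h.trans_eq rfl)
    calc ‖gradF i w‖ = Real.sqrt (‖gradF i w‖ ^ 2) := by
          rw [Real.sqrt_sq (norm_nonneg _)]
      _ ≤ Real.sqrt B2 := Real.sqrt_le_sqrt h
  -- decomposition of v
  have hsplit : (∑ i, gradF i w) = (∑ i ∈ X, gradF i w) + ∑ i ∈ Xᶜ, gradF i w :=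
    (Finset.sum_add_sum_compl X _).symm
  have hvdecomp : v = (k⁻¹ - n⁻¹) • (∑ i ∈ X, gradF i w) - n⁻¹ • ∑ i ∈ Xᶜ, gradF i w := by
    rw [hv, hg, hGsum, hsplit]
    simp only [smul_add, sub_smul]
    abel
  have hcardcompl : ((Xᶜ : Finset (Fin N)).card : ℝ) = n - k := by
    have : (Xᶜ : Finset (Fin N)).card = N - X.card := by
      rw [Finset.card_compl]; simp
    have hXN : X.card ≤ N := by simpa using X.card_le_univ
    rw [this, Nat.cast_sub hXN]
  have hkinv : (0:ℝ) ≤ k⁻¹ - n⁻¹ := by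
    have := inv_anti₀ hk0 hkN
    linarith
  have hsum1 : ‖∑ i ∈ X, gradF i w‖ ≤ k * Real.sqrt B2 := by
    calc ‖∑ i ∈ X, gradF i w‖ ≤ ∑ i ∈ X, ‖gradF i w‖ := norm_sum_le _ _
      _ ≤ ∑ _i ∈ X, Real.sqrt B2 := Finset.sum_le_sum fun i _ => hnormh i
      _ = k * Real.sqrt B2 := by rw [Finset.sum_const, nsmul_eq_mul]
  have hsum2 : ‖∑ i ∈ Xᶜ, gradF i w‖ ≤ (n - k) * Real.sqrt B2 := by
    calc ‖∑ i ∈ Xᶜ, gradF i w‖ ≤ ∑ i ∈ Xᶜ, ‖gradF i w‖ := norm_sum_le _ _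
      _ ≤ ∑ _i ∈ Xᶜ, Real.sqrt B2 := Finset.sum_le_sum fun i _ => hnormh i
      _ = (n - k) * Real.sqrt B2 := by rw [Finset.sum_const, nsmul_eq_mul, hcardcompl]
  have hnk : 0 ≤ 1 - k / n := by
    rw [sub_nonneg, div_le_one hn0]; exact hkN
  have hvbound : ‖v‖ ≤ 2 * (1 - k / n) * Real.sqrt B2 := by
    have hs : Real.sqrt B2 ≥ 0 := Real.sqrt_nonneg _
    calc ‖v‖ ≤ ‖(k⁻¹ - n⁻¹) • (∑ i ∈ X, gradF i w)‖ + ‖n⁻¹ • ∑ i ∈ Xᶜ, gradF i w‖ := by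
          rw [hvdecomp]; exact norm_sub_le _ _
      _ = (k⁻¹ - n⁻¹) * ‖∑ i ∈ X, gradF i w‖ + n⁻¹ * ‖∑ i ∈ Xᶜ, gradF i w‖ := by
          rw [norm_smul, norm_smul, Real.norm_of_nonneg hkinv,
            Real.norm_of_nonneg (by positivity : (0:ℝ) ≤ n⁻¹)]
      _ ≤ (k⁻¹ - n⁻¹) * (k * Real.sqrt B2) + n⁻¹ * ((n - k) * Real.sqrt B2) := by
          gcongr
      _ = 2 * (1 - k / n) * Real.sqrt B2 := by
          field_simp
          ring
  rcases eq_or_ne v 0 with hv0 | hv0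
  · rw [hv0]
    have hz : ⟪toOp A (0 : Vec d), (0 : Vec d)⟫ = (0:ℝ) := by simp
    rw [hz]; linarith
  · -- lmax is positive
    have hAvv : 0 < ⟪toOp A v, v⟫ := toOp_inner_pos hA hv0
    have hv2 : (0:ℝ) < ‖v‖ ^ 2 := pow_pos (norm_pos_iff.mpr hv0) 2
    have hlmaxpos : 0 < lmax := by
      have := hlmax v
      nlinarith
    have hB2pos : 0 < B2 := by
      rcases lt_or_eq_of_le hB2 with h | h
      · exact h
      · exfalso
        have : Real.sqrt B2 = 0 := by rw [← h, Real.sqrt_zero]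
        have hvle : ‖v‖ ≤ 0 := by rw [this] at hvbound; linarith [mul_nonneg (by linarith : (0:ℝ) ≤ 2 * (1 - k/n)) (le_of_eq this.symm)]
        exact hv0 (norm_le_zero_iff.mp hvle)
    set D : ℝ := 4 * lmax * B2 with hDdef
    have hDpos : 0 < D := by positivity
    -- from hcard : n * (1 - √(S/D)) ≤ k
    have hle : 1 - k / n ≤ Real.sqrt (S / D) := by
      have h1 : n * (1 - Real.sqrt (S / D)) ≤ k := hcard
      have h2 : 1 - Real.sqrt (S / D) ≤ k / n := by
        rw [le_div_iff₀ hn0]; linarith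
      linarith
    have hsq : (1 - k / n) ^ 2 ≤ S / D := by
      have := pow_le_pow_left₀ hnk hle 2
      rwa [Real.sq_sqrt (div_nonneg hS hDpos.le)] at this
    have hnorm2 : ‖v‖ ^ 2 ≤ 4 * B2 * (1 - k / n) ^ 2 := by
      have := pow_le_pow_left₀ (norm_nonneg v) hvbound 2
      calc ‖v‖ ^ 2 ≤ (2 * (1 - k / n) * Real.sqrt B2) ^ 2 := this
        _ = 4 * (1 - k / n) ^ 2 * (Real.sqrt B2) ^ 2 := by ring
        _ = 4 * B2 * (1 - k / n) ^ 2 := by rw [Real.sq_sqrt hB2]; ring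
    calc ⟪toOp A v, v⟫ ≤ lmax * ‖v‖ ^ 2 := hlmax v
      _ ≤ lmax * (4 * B2 * (1 - k / n) ^ 2) := by
          exact mul_le_mul_of_nonneg_left hnorm2 hlmaxpos.le
      _ = D * (1 - k / n) ^ 2 := by rw [hDdef]; ring
      _ ≤ D * (S / D) := by gcongr
      _ = S := by field_simp
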